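/- Let A be a commutative algebra and I an abstract continuity ideal in A. Then there is no strictly decreasing infinite sequence P_1 ⊋ P_2 ⊋ ⋯ of prime ideals of the form P_n = (I : f_n) for f_n ∈ A. Consequently, every prime ideal of the form (I : f) contains a minimal one among all such primes. -/
import Mathlib


/-- The quotient ideal `(J : a) = {x | a * x ∈ J}`. -/
def quotIdeal {A : Type*} [CommRing A] (J : Ideal A) (a : A) : Ideal A where
  carrier := {x | a * x ∈ J}
  zero_mem' := by simp
  add_mem' := by
    intro x y hx hy
    simpa [mul_add] using J.add_mem hx hy
  smul_mem' := by
    intro c x hx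
    simp only [smul_eq_mul, Set.mem_setOf_eq, mul_left_comm a c x] at *
    exact J.mul_mem_left c hx

lemma mem_quotIdeal {A : Type*} [CommRing A] {J : Ideal A} {a x : A} :
    x ∈ quotIdeal J a ↔ a * x ∈ J := Iff.rfl

/-- An ideal `I` is an abstract continuity ideal if for every sequence
`(a n)` the increasing chain of quotient ideals eventually stabilizes. -/
def AbstractContinuityIdeal {A : Type*} [CommRing A] (I : Ideal A) : Prop :=
  ∀ a : ℕ → A, ∃ n₀ : ℕ, ∀ n ≥ n₀,
    quotIdeal I (∏ i ∈ Finset.range n, a i) =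
      quotIdeal I (∏ i ∈ Finset.range (n + 1), a i)

/-- For an abstract continuity ideal `I`, there is no strictly decreasing
infinite sequence of prime ideals of the form `(I : f)`; consequently every
prime of the form `(I : f)` contains a minimal one among such primes. -/
theorem no_strictly_decreasing_and_minimal_exists {A : Type*} [CommRing A]
    (I : Ideal A) (hI : AbstractContinuityIdeal I) :
    (¬ ∃ f : ℕ → A, (∀ n, (quotIdeal I (f n)).IsPrime) ∧
        ∀ n, quotIdeal I (f (n + 1)) < quotIdeal I (f n)) ∧
      (∀ f : A, (quotIdeal I f).IsPrime →
        ∃ g : A, (quotIdeal I g).IsPrime ∧ quotIdeal I g ≤ quotIdeal I f ∧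
          ∀ h : A, (quotIdeal I h).IsPrime →
            quotIdeal I h ≤ quotIdeal I g → quotIdeal I h = quotIdeal I g) := by
  have key : ¬ ∃ f : ℕ → A, (∀ n, (quotIdeal I (f n)).IsPrime) ∧
      ∀ n, quotIdeal I (f (n + 1)) < quotIdeal I (f n) := by
    rintro ⟨f, hprime, hdec⟩
    -- pick aₙ ∈ Pₙ \ Pₙ₊₁
    have hchoice : ∀ n, ∃ a : A, a ∈ quotIdeal I (f n) ∧ a ∉ quotIdeal I (f (n + 1)) := by
      intro n
      obtain ⟨a, ha1, ha2⟩ := SetLike.exists_of_lt (hdec n)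
      exact ⟨a, ha1, ha2⟩
    choose a ha1 ha2 using hchoice
    -- Pₘ ≤ Pₙ for n ≤ m
    have hmono : ∀ {n m : ℕ}, n ≤ m → quotIdeal I (f m) ≤ quotIdeal I (f n) := by
      intro n m hnm
      induction m with
      | zero => simpa [Nat.le_zero.mp hnm]
      | succ m ih =>
        rcases Nat.lt_or_ge n (m + 1) with h | h
        · exact le_trans (hdec m).le (ih (Nat.lt_succ_iff.mp h))
        · have : n = m + 1 := le_antisymm hnm h
          simp [this]
    obtain ⟨n₀, hn₀⟩ := hI a
    have heq := hn₀ n₀ le_rfl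
    set c : ℕ → A := fun n => ∏ i ∈ Finset.range n, a i with hc
    -- f n₀ ∈ (I : c (n₀+1))
    have hin : f n₀ ∈ quotIdeal I (c (n₀ + 1)) := by
      show c (n₀ + 1) * f n₀ ∈ I
      have h1 : c (n₀ + 1) = c n₀ * a n₀ := Finset.prod_range_succ a n₀
      have h2 : c (n₀ + 1) * f n₀ = c n₀ * (f n₀ * a n₀) := by rw [h1]; ring
      rw [h2]
      exact I.mul_mem_left _ (ha1 n₀)
    -- f n₀ ∉ (I : c n₀)
    have hnotin : f n₀ ∉ quotIdeal I (c n₀) := by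
      intro hmem
      rw [mem_quotIdeal, mul_comm] at hmem
      have hcP : c n₀ ∈ quotIdeal I (f n₀) := hmem
      have hex : ∃ i ∈ Finset.range n₀, a i ∈ quotIdeal I (f n₀) := by
        have := (Ideal.IsPrime.prod_mem_iff (hp := hprime n₀)
          (s := Finset.range n₀) (x := a)).mp hcP
        exact this
      obtain ⟨i, hi, hai⟩ := hex
      have hi' : i + 1 ≤ n₀ := Finset.mem_range.mp hi
      exact ha2 i (hmono hi' hai)
    rw [heq] at hnotin
    exact hnotin hin
  refine ⟨key, ?_⟩
  intro f hf
  by_contra hno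
  push_neg at hno
  -- every prime (I:g) ≤ (I:f) has a strictly smaller one of the same form
  have step : ∀ g : A, (quotIdeal I g).IsPrime → quotIdeal I g ≤ quotIdeal I f →
      ∃ h : A, (quotIdeal I h).IsPrime ∧ quotIdeal I h < quotIdeal I g := by
    intro g hg hgf
    obtain ⟨h, hh, hle, hne⟩ := hno g hg hgf
    exact ⟨h, hh, lt_of_le_of_ne hle hne⟩
  -- build a strictly decreasing sequence
  let T := {g : A // (quotIdeal I g).IsPrime ∧ quotIdeal I g ≤ quotIdeal I f}
  have next : ∀ t : T, ∃ t' : T, quotIdeal I t'.1 < quotIdeal I t.1 := by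
    rintro ⟨g, hg, hgf⟩
    obtain ⟨h, hh, hlt⟩ := step g hg hgf
    exact ⟨⟨h, hh, le_trans hlt.le hgf⟩, hlt⟩
  choose F hF using next
  let seq : ℕ → T := fun n => F^[n] ⟨f, hf, le_rfl⟩
  apply key
  refine ⟨fun n => (seq n).1, fun n => (seq n).2.1, fun n => ?_⟩
  show quotIdeal I (seq (n + 1)).1 < quotIdeal I (seq n).1
  have h : seq (n + 1) = F (seq n) := Function.iterate_succ_apply' F n _
  rw [h]
  exact hF (seq n)
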